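/- Let $\mathrm{Vir}$ be the Virasoro algebra and for $s \in \mathbb{Z}_{\geq 0}$, $l, m \in \mathbb{Z}$ define $\omega^{(s)}_{l,m} = \sum_{i=0}^s \binom{s}{i}(-1)^{s-i} d_{l-m-i} d_{m+i} \in U(\mathrm{Vir})$. Then in the module $A_b = \mathbb{C}[t,t^{-1}]$ with action $d_k(t^n) = (n+b+bk)t^{n+k}$, $c = 0$ ($b \in \mathbb{C}$), one has $\omega^{(r)}_{l,m}(A_b) = 0$ for all $l,m \in \mathbb{Z}$ and all $r \geq 3$. -/

import Mathlib

noncomputable section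

/-- The Lu–Zhao module `A_b = ℂ[t, t⁻¹]`, modelled as `ℤ →₀ ℂ`
(the Laurent monomial `t^n` corresponds to `Finsupp.single n 1`),
with Virasoro action `d_k (t^n) = (n + b + b k) t^{n+k}` and `c = 0`. -/
def dA (b : ℂ) (k : ℤ) (y : ℤ →₀ ℂ) : ℤ →₀ ℂ :=
  y.sum fun n a => Finsupp.single (n + k) (((n : ℂ) + b + b * k) * a)

/-- The operator `ω^{(s)}_{l,m} = ∑_{i=0}^s C(s,i) (-1)^{s-i} d_{l-m-i} d_{m+i}`,
acting on `A_b`. -/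
def omegaA (b : ℂ) (s : ℕ) (l m : ℤ) (y : ℤ →₀ ℂ) : ℤ →₀ ℂ :=
  ∑ i ∈ Finset.range (s + 1),
    ((s.choose i : ℂ) * (-1 : ℂ) ^ (s - i)) • dA b (l - m - i) (dA b (m + i) y)

open Finset

/-- forward difference operator -/
def fd (f : ℕ → ℂ) : ℕ → ℂ := fun n => f (n + 1) - f n

lemma fd_zero : fd (fun _ => (0:ℂ)) = fun _ => 0 := by
  funext n; simp [fd]

lemma fd_iter_zero (k : ℕ) : fd^[k] (fun _ => (0:ℂ)) = fun _ => 0 := by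
  induction k with
  | zero => rfl
  | succ k ih => rw [Function.iterate_succ_apply, fd_zero, ih]

lemma fd_quad (A B C : ℂ) :
    fd^[3] (fun i : ℕ => A + B * i + C * (i:ℂ)^2) = fun _ => 0 := by
  have h1 : fd (fun i : ℕ => A + B * i + C * (i:ℂ)^2)
      = fun i : ℕ => (B + C) + (2*C) * i := by
    funext n; simp only [fd]; push_cast; ring
  have h2 : fd (fun i : ℕ => (B + C) + (2*C) * (i:ℂ))
      = fun _ : ℕ => (2*C) := by
    funext n; simp only [fd]; push_cast; ring
  have h3 : fd (fun _ : ℕ => (2*C)) = fun _ => 0 := by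
    funext n; simp [fd]
  rw [show (3:ℕ) = 2+1 from rfl, Function.iterate_succ_apply, h1,
    Function.iterate_succ_apply, h2, Function.iterate_one, h3]

lemma neg_one_sub (s i : ℕ) (h : i ≤ s) : ((-1:ℂ))^(s-i) = (-1)^s * (-1)^i := by
  have hs : ((-1:ℂ))^s = (-1)^(s-i) * (-1)^i := by rw [← pow_add, Nat.sub_add_cancel h]
  rw [hs, mul_assoc, ← pow_add, ← two_mul, pow_mul]
  norm_num

lemma sign_conv (s : ℕ) (f : ℕ → ℂ) :
    ∑ i ∈ range (s+1), (s.choose i : ℂ) * (-1:ℂ)^(s-i) * f i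
      = (-1:ℂ)^s * ∑ i ∈ range (s+1), (s.choose i : ℂ) * (-1:ℂ)^i * f i := by
  rw [Finset.mul_sum]
  refine sum_congr rfl fun i hi => ?_
  have hi' : i ≤ s := Nat.lt_succ_iff.mp (mem_range.mp hi)
  rw [neg_one_sub s i hi']; ring

lemma pascal_sum (s : ℕ) (f : ℕ → ℂ) :
    ∑ i ∈ range (s+2), ((s+1).choose i : ℂ) * (-1:ℂ)^i * f i
      = ∑ i ∈ range (s+1), (s.choose i : ℂ) * (-1:ℂ)^i * f i
        - ∑ i ∈ range (s+1), (s.choose i : ℂ) * (-1:ℂ)^i * f (i+1) := by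
  have h : ∑ i ∈ range (s+1), (s.choose (i+1) : ℂ) * (-1:ℂ)^(i+1) * f (i+1)
        + (s.choose 0 : ℂ) * (-1:ℂ)^0 * f 0
      = ∑ i ∈ range (s+1), (s.choose i : ℂ) * (-1:ℂ)^i * f i := by
    rw [← sum_range_succ' (fun i => (s.choose i : ℂ) * (-1:ℂ)^i * f i) (s+1),
      sum_range_succ, Nat.choose_succ_self]
    simp
  rw [sum_range_succ' (fun i => ((s+1).choose i : ℂ) * (-1:ℂ)^i * f i) (s+1)]
  simp only [Nat.choose_succ_succ, Nat.cast_add]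
  rw [← h]
  simp only [add_mul]
  rw [sum_add_distrib]
  simp [pow_succ]
  ring

lemma key (s : ℕ) (f : ℕ → ℂ) :
    ∑ i ∈ range (s+1), (s.choose i : ℂ) * (-1:ℂ)^(s-i) * f i = fd^[s] f 0 := by
  induction s generalizing f with
  | zero => simp
  | succ s ih =>
    rw [Function.iterate_succ_apply, ← ih (fd f), sign_conv (s+1) f, sign_conv s (fd f)]
    have : (s+1) + 1 = s + 2 := rfl
    rw [this, pascal_sum]
    simp only [fd, mul_sub]
    rw [sum_sub_distrib]
    ring

lemma key_zero (s : ℕ) (hs : 3 ≤ s) (A B C : ℂ) :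
    ∑ i ∈ range (s+1), (s.choose i : ℂ) * (-1:ℂ)^(s-i) * (A + B*i + C*(i:ℂ)^2) = 0 := by
  rw [key]
  obtain ⟨k, rfl⟩ : ∃ k, s = k + 3 := ⟨s - 3, by omega⟩
  rw [Function.iterate_add_apply, fd_quad, fd_iter_zero]

lemma dA_single (b : ℂ) (k n : ℤ) (a : ℂ) :
    dA b k (Finsupp.single n a) = Finsupp.single (n+k) (((n:ℂ)+b+b*k)*a) := by
  rw [dA, Finsupp.sum_single_index]
  simp

lemma dA_zero (b : ℂ) (k : ℤ) : dA b k 0 = 0 := by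
  simp [dA]

lemma dA_add (b : ℂ) (k : ℤ) (x y : ℤ →₀ ℂ) : dA b k (x+y) = dA b k x + dA b k y := by
  rw [dA, dA, dA, Finsupp.sum_add_index] <;> intros <;> simp [mul_add, Finsupp.single_add]

lemma omegaA_single (b : ℂ) (s : ℕ) (l m n : ℤ) (a : ℂ) (hs : 3 ≤ s) :
    omegaA b s l m (Finsupp.single n a) = 0 := by
  set A := ((n:ℂ) + m + b + b*l - b*m) * ((n:ℂ) + b + b*m) with hA
  set B := ((n:ℂ) + m + b + b*l - b*m) * b + (1-b) * ((n:ℂ) + b + b*m) with hB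
  set C := ((1:ℂ)-b) * b with hC
  rw [omegaA]
  have step : ∀ i ∈ range (s+1),
      ((s.choose i : ℂ) * (-1 : ℂ) ^ (s - i)) • dA b (l - m - i) (dA b (m + i) (Finsupp.single n a))
        = Finsupp.single (n + l)
            ((s.choose i : ℂ) * (-1 : ℂ) ^ (s - i) * ((A + B * i + C * (i:ℂ)^2) * a)) := by
    intro i _
    rw [dA_single, dA_single, Finsupp.smul_single]
    congr 1
    · omega
    · simp only [smul_eq_mul, hA, hB, hC]; push_cast; ring
  have collect : (∑ i ∈ range (s + 1), Finsupp.single (n + l)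
        ((s.choose i : ℂ) * (-1 : ℂ) ^ (s - i) * ((A + B * i + C * (i:ℂ)^2) * a)))
      = Finsupp.single (n + l) (∑ i ∈ range (s + 1),
        (s.choose i : ℂ) * (-1 : ℂ) ^ (s - i) * ((A + B * i + C * (i:ℂ)^2) * a)) :=
    (map_sum (Finsupp.singleAddHom (n + l)) _ _).symm
  rw [sum_congr rfl step, collect]
  have hsum : ∑ i ∈ range (s+1),
      (s.choose i : ℂ) * (-1 : ℂ) ^ (s - i) * ((A + B * i + C * (i:ℂ)^2) * a) = 0 := by
    have h0 := key_zero s hs A B C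
    calc ∑ i ∈ range (s+1), (s.choose i : ℂ) * (-1:ℂ)^(s-i) * ((A + B*i + C*(i:ℂ)^2) * a)
        = (∑ i ∈ range (s+1), (s.choose i : ℂ) * (-1:ℂ)^(s-i) * (A + B*i + C*(i:ℂ)^2)) * a := by
          rw [sum_mul]; exact sum_congr rfl fun i _ => by ring
      _ = 0 := by rw [h0, zero_mul]
  rw [hsum, Finsupp.single_zero]

/-- In the module `A_b` one has `ω^{(r)}_{l,m}(A_b) = 0` for all `l, m ∈ ℤ` and all `r ≥ 3`. -/
theorem stmt16 (b : ℂ) (l m : ℤ) (r : ℕ) (hr : 3 ≤ r) (y : ℤ →₀ ℂ) :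
    omegaA b r l m y = 0 := by
  induction y using Finsupp.induction with
  | zero => simp [omegaA, dA_zero]
  | single_add n a y _ _ ih =>
    have hadd : omegaA b r l m (Finsupp.single n a + y)
        = omegaA b r l m (Finsupp.single n a) + omegaA b r l m y := by
      simp only [omegaA, dA_add, smul_add, sum_add_distrib]
    rw [hadd, ih, omegaA_single b r l m n a hr, add_zero]
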